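/- Let M ≥ 2 be an even integer. Then the modified DST matrix S ∈ ℝ^{M×M} has rank M−1. -/

import Mathlib

open Real Finset Matrix

/-! ### Auxiliary trigonometric lemmas -/

private lemma cos_nat_mul_pi' (n : ℕ) : Real.cos (n * Real.pi) = (-1 : ℝ) ^ n := by
  induction n with
  | zero => simp
  | succ n ih =>
    have : ((n + 1 : ℕ) : ℝ) * Real.pi = n * Real.pi + Real.pi := by push_cast; ring
    rw [this, Real.cos_add_pi, ih, pow_succ]
    ring

private lemma dst_telescope (θ : ℝ) (M : ℕ) :
    ∑ n ∈ Finset.range M, 2 * Real.sin (θ / 2) * Real.cos (θ * (n + 1 / 2)) =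
      Real.sin (θ * M) := by
  have h := Finset.sum_range_sub (f := fun n : ℕ => Real.sin (θ * n)) M
  simp only [Nat.cast_zero, mul_zero, Real.sin_zero, sub_zero] at h
  rw [← h]
  refine Finset.sum_congr rfl fun n _ => ?_
  rw [Real.sin_sub_sin]
  push_cast
  ring_nf

private lemma sin_ne_zero_of_abs_lt {y : ℝ} (h0 : y ≠ 0) (h : |y| < Real.pi) :
    Real.sin y ≠ 0 := by
  rw [abs_lt] at h
  exact fun hs => h0 ((Real.sin_eq_zero_iff_of_lt_of_lt h.1 h.2).mp hs)

private lemma dst_cos_sum (M : ℕ) (hM : 0 < M) (x : ℝ)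
    (h1 : Real.sin (Real.pi * x / (2 * M)) ≠ 0) (h2 : Real.sin (Real.pi * x) = 0) :
    ∑ n ∈ Finset.range M, Real.cos (Real.pi * x / M * (n + 1 / 2)) = 0 := by
  have hM' : (M : ℝ) ≠ 0 := Nat.cast_ne_zero.mpr hM.ne'
  have ht := dst_telescope (Real.pi * x / M) M
  have e1 : Real.pi * x / M * M = Real.pi * x := by field_simp
  have e2 : Real.pi * x / M / 2 = Real.pi * x / (2 * M) := by ring
  rw [e1, e2, h2] at ht
  have hfac : 2 * Real.sin (Real.pi * x / (2 * M)) *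
      ∑ n ∈ Finset.range M, Real.cos (Real.pi * x / M * (n + 1 / 2)) = 0 := by
    rw [Finset.mul_sum]; exact ht
  rcases mul_eq_zero.mp hfac with h | h
  · exfalso
    rcases mul_eq_zero.mp h with h' | h'
    · norm_num at h'
    · exact h1 h'
  · exact h

private lemma sin_mul_sin' (a b : ℝ) :
    Real.sin a * Real.sin b = (Real.cos (a - b) - Real.cos (a + b)) / 2 := by
  rw [Real.cos_sub, Real.cos_add]; ring

/-- Orthogonality of the DST rows. -/
private lemma dst_orth (M k l : ℕ) (hM : 0 < M) (hk : 1 ≤ k) (hk' : k ≤ M)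
    (hl : 1 ≤ l) (hl' : l ≤ M) (hne : k ≠ l) :
    ∑ n ∈ Finset.range M, Real.sin (Real.pi / M * k * (n + 1 / 2)) *
      Real.sin (Real.pi / M * l * (n + 1 / 2)) = 0 := by
  have hMr : (0 : ℝ) < M := by exact_mod_cast hM
  have hM' : (M : ℝ) ≠ 0 := ne_of_gt hMr
  have hπ := Real.pi_pos
  have hkr : (1 : ℝ) ≤ (k : ℝ) := by exact_mod_cast hk
  have hkr' : (k : ℝ) ≤ M := by exact_mod_cast hk'
  have hlr : (1 : ℝ) ≤ (l : ℝ) := by exact_mod_cast hl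
  have hlr' : (l : ℝ) ≤ M := by exact_mod_cast hl'
  have hkl : (k : ℝ) ≠ l := by exact_mod_cast hne
  have key : ∀ n : ℕ,
      Real.sin (Real.pi / M * k * (n + 1 / 2)) * Real.sin (Real.pi / M * l * (n + 1 / 2)) =
        (Real.cos (Real.pi * ((k : ℝ) - l) / M * (n + 1 / 2)) -
          Real.cos (Real.pi * ((k : ℝ) + l) / M * (n + 1 / 2))) / 2 := by
    intro n
    rw [sin_mul_sin']
    have e1 : Real.pi / M * k * (n + 1 / 2) - Real.pi / M * l * (n + 1 / 2) =
        Real.pi * ((k : ℝ) - l) / M * (n + 1 / 2) := by ring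
    have e2 : Real.pi / M * k * (n + 1 / 2) + Real.pi / M * l * (n + 1 / 2) =
        Real.pi * ((k : ℝ) + l) / M * (n + 1 / 2) := by ring
    rw [e1, e2]
  have hC1 : ∑ n ∈ Finset.range M,
      Real.cos (Real.pi * ((k : ℝ) - l) / M * (n + 1 / 2)) = 0 := by
    apply dst_cos_sum M hM
    · apply sin_ne_zero_of_abs_lt
      · apply div_ne_zero
        · exact mul_ne_zero (ne_of_gt hπ) (sub_ne_zero.mpr hkl)
        · positivity
      · rw [abs_div, abs_mul, abs_of_pos hπ, abs_of_pos (by positivity : (0 : ℝ) < 2 * M)]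
        rw [div_lt_iff₀ (by positivity)]
        have habs : |(k : ℝ) - l| < 2 * M := by
          rw [abs_lt]; constructor <;> nlinarith
        nlinarith [abs_nonneg ((k : ℝ) - l)]
    · have : (k : ℝ) - l = (((k : ℤ) - l : ℤ) : ℝ) := by push_cast; ring
      rw [this, mul_comm]
      exact Real.sin_int_mul_pi _
  have hC2 : ∑ n ∈ Finset.range M,
      Real.cos (Real.pi * ((k : ℝ) + l) / M * (n + 1 / 2)) = 0 := by
    apply dst_cos_sum M hM
    · have hsum : k + l < 2 * M := by omega
      have hsumr : (k : ℝ) + l < 2 * M := by exact_mod_cast hsum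
      apply ne_of_gt
      apply Real.sin_pos_of_pos_of_lt_pi
      · have : (0 : ℝ) < (k : ℝ) + l := by linarith
        positivity
      · rw [div_lt_iff₀ (by positivity)]
        nlinarith
    · have : (k : ℝ) + l = ((k + l : ℕ) : ℝ) := by push_cast; ring
      rw [this, mul_comm]
      exact Real.sin_nat_mul_pi _
  calc ∑ n ∈ Finset.range M, Real.sin (Real.pi / M * k * (n + 1 / 2)) *
        Real.sin (Real.pi / M * l * (n + 1 / 2))
      = ∑ n ∈ Finset.range M,
        (Real.cos (Real.pi * ((k : ℝ) - l) / M * (n + 1 / 2)) -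
          Real.cos (Real.pi * ((k : ℝ) + l) / M * (n + 1 / 2))) / 2 :=
        Finset.sum_congr rfl fun n _ => key n
    _ = ((∑ n ∈ Finset.range M, Real.cos (Real.pi * ((k : ℝ) - l) / M * (n + 1 / 2))) -
        ∑ n ∈ Finset.range M, Real.cos (Real.pi * ((k : ℝ) + l) / M * (n + 1 / 2))) / 2 := by
        rw [← Finset.sum_div, Finset.sum_sub_distrib]
    _ = 0 := by rw [hC1, hC2]; norm_num

/-- Squared norm of a DST row. -/
private lemma dst_norm (M k : ℕ) (hM : 0 < M) (hk : 1 ≤ k) (hk' : k < M) :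
    ∑ n ∈ Finset.range M, Real.sin (Real.pi / M * k * (n + 1 / 2)) *
      Real.sin (Real.pi / M * k * (n + 1 / 2)) = M / 2 := by
  have hMr : (0 : ℝ) < M := by exact_mod_cast hM
  have hM' : (M : ℝ) ≠ 0 := ne_of_gt hMr
  have hπ := Real.pi_pos
  have key : ∀ n : ℕ,
      Real.sin (Real.pi / M * k * (n + 1 / 2)) * Real.sin (Real.pi / M * k * (n + 1 / 2)) =
        (1 - Real.cos (Real.pi * ((2 * k : ℕ) : ℝ) / M * (n + 1 / 2))) / 2 := by
    intro n
    rw [sin_mul_sin', sub_self, Real.cos_zero]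
    congr 2
    push_cast
    ring
  have hC : ∑ n ∈ Finset.range M,
      Real.cos (Real.pi * ((2 * k : ℕ) : ℝ) / M * (n + 1 / 2)) = 0 := by
    apply dst_cos_sum M hM
    · have h1 : (0 : ℝ) < ((2 * k : ℕ) : ℝ) := by
        have : 0 < 2 * k := by omega
        exact_mod_cast this
      have h2 : ((2 * k : ℕ) : ℝ) < 2 * M := by
        have : 2 * k < 2 * M := by omega
        exact_mod_cast this
      apply ne_of_gt
      apply Real.sin_pos_of_pos_of_lt_pi
      · positivity
      · rw [div_lt_iff₀ (by positivity)]
        nlinarith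
    · rw [mul_comm]
      exact Real.sin_nat_mul_pi _
  calc ∑ n ∈ Finset.range M, Real.sin (Real.pi / M * k * (n + 1 / 2)) *
        Real.sin (Real.pi / M * k * (n + 1 / 2))
      = ∑ n ∈ Finset.range M,
        (1 - Real.cos (Real.pi * ((2 * k : ℕ) : ℝ) / M * (n + 1 / 2))) / 2 :=
        Finset.sum_congr rfl fun n _ => key n
    _ = ((∑ _n ∈ Finset.range M, (1 : ℝ)) -
        ∑ n ∈ Finset.range M, Real.cos (Real.pi * ((2 * k : ℕ) : ℝ) / M * (n + 1 / 2))) / 2 := by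
        rw [← Finset.sum_div, Finset.sum_sub_distrib]
    _ = M / 2 := by
        rw [hC, Finset.sum_const, Finset.card_range]
        simp

/-- The alternating vector is orthogonal to each DST row. -/
private lemma dst_alt (M k : ℕ) (hM : 0 < M) (hk : 1 ≤ k) (hk' : k < M) :
    ∑ n ∈ Finset.range M, Real.sin (Real.pi / M * k * (n + 1 / 2)) * (-1 : ℝ) ^ n = 0 := by
  have hMr : (0 : ℝ) < M := by exact_mod_cast hM
  have hM' : (M : ℝ) ≠ 0 := ne_of_gt hMr
  have hpt : ∀ n : ℕ, ((-1 : ℝ)) ^ n = Real.sin (Real.pi / M * M * (n + 1 / 2)) := by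
    intro n
    have e1 : Real.pi / M * M = Real.pi := by field_simp
    have e2 : Real.pi * ((n : ℝ) + 1 / 2) = (n : ℝ) * Real.pi + Real.pi / 2 := by ring
    rw [e1, e2, Real.sin_add_pi_div_two, cos_nat_mul_pi']
  have horth := dst_orth M k M hM hk (le_of_lt hk') (by omega) le_rfl (by omega)
  calc ∑ n ∈ Finset.range M, Real.sin (Real.pi / M * k * (n + 1 / 2)) * (-1 : ℝ) ^ n
      = ∑ n ∈ Finset.range M, Real.sin (Real.pi / M * k * (n + 1 / 2)) *
          Real.sin (Real.pi / M * M * (n + 1 / 2)) :=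
        Finset.sum_congr rfl fun n _ => by rw [hpt n]
    _ = 0 := horth

/-- The modified DST matrix `S ∈ ℝ^{M×M}` (row 0 replaced by the constant row `√(1/M)`). -/
noncomputable def modDstMat (M : ℕ) : Matrix (Fin M) (Fin M) ℝ :=
  Matrix.of fun k n =>
    if (k : ℕ) = 0 then Real.sqrt (1 / M)
    else Real.sqrt (2 / M) * Real.sin (Real.pi / M * (k : ℕ) * ((n : ℕ) + 1 / 2))

/-- Proposition 2: `rank S = M − 1`. -/
theorem modDst_rank (M : ℕ) (hM : 2 ≤ M) (hEven : Even M) :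
    (modDstMat M).rank = M - 1 := by
  have hM0 : 0 < M := by omega
  have hMr : (0 : ℝ) < M := by exact_mod_cast hM0
  have hM' : (M : ℝ) ≠ 0 := ne_of_gt hMr
  haveI : NeZero M := ⟨by omega⟩
  set S := modDstMat M with hSdef
  set w : Fin M → ℝ := fun i => if (i : ℕ) = 0 then 0 else 1 with hw
  have hsq : Real.sqrt (2 / M) * Real.sqrt (2 / M) = 2 / M :=
    Real.mul_self_sqrt (by positivity)
  -- lower bound
  have hmul : Matrix.diagonal w * S * (Matrix.diagonal w * S)ᵀ = Matrix.diagonal w := by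
    ext k l
    rw [Matrix.mul_apply]
    simp only [Matrix.transpose_apply, Matrix.diagonal_mul]
    by_cases hk0 : (k : ℕ) = 0
    · have hwk : w k = 0 := by show (if (k : ℕ) = 0 then (0 : ℝ) else 1) = 0; rw [if_pos hk0]
      simp [hwk, Matrix.diagonal_apply]
    · by_cases hl0 : (l : ℕ) = 0
      · have hwl : w l = 0 := by show (if (l : ℕ) = 0 then (0 : ℝ) else 1) = 0; rw [if_pos hl0]
        have hkl : k ≠ l := fun h => hk0 (h ▸ hl0)
        simp [hwl, Matrix.diagonal_apply_ne _ hkl]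
      · have hwk : w k = 1 := by show (if (k : ℕ) = 0 then (0 : ℝ) else 1) = 1; rw [if_neg hk0]
        have hwl : w l = 1 := by show (if (l : ℕ) = 0 then (0 : ℝ) else 1) = 1; rw [if_neg hl0]
        have hentry : ∀ n : Fin M, w k * S k n * (w l * S l n) =
            2 / M * (Real.sin (Real.pi / M * (k : ℕ) * ((n : ℕ) + 1 / 2)) *
              Real.sin (Real.pi / M * (l : ℕ) * ((n : ℕ) + 1 / 2))) := by
          intro n
          rw [hwk, hwl, hSdef]
          simp only [modDstMat, Matrix.of_apply, if_neg hk0, if_neg hl0]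
          rw [one_mul, one_mul, mul_mul_mul_comm, hsq]
        rw [Finset.sum_congr rfl fun n _ => hentry n, ← Finset.mul_sum]
        have hconv : ∑ n : Fin M, Real.sin (Real.pi / M * (k : ℕ) * ((n : ℕ) + 1 / 2)) *
            Real.sin (Real.pi / M * (l : ℕ) * ((n : ℕ) + 1 / 2)) =
            ∑ n ∈ Finset.range M, Real.sin (Real.pi / M * (k : ℕ) * ((n : ℕ) + 1 / 2)) *
              Real.sin (Real.pi / M * (l : ℕ) * ((n : ℕ) + 1 / 2)) :=
          Fin.sum_univ_eq_sum_range (fun n : ℕ => Real.sin (Real.pi / M * (k : ℕ) * ((n : ℝ) + 1 / 2)) *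
            Real.sin (Real.pi / M * (l : ℕ) * ((n : ℝ) + 1 / 2))) M
        rw [hconv]
        by_cases hkl : k = l
        · subst hkl
          rw [dst_norm M (k : ℕ) hM0 (by omega) k.isLt]
          rw [Matrix.diagonal_apply_eq, hwk]
          field_simp
        · have hkln : (k : ℕ) ≠ (l : ℕ) := fun h => hkl (Fin.ext h)
          rw [dst_orth M (k : ℕ) (l : ℕ) hM0 (by omega) (le_of_lt k.isLt)
            (by omega) (le_of_lt l.isLt) hkln]
          rw [Matrix.diagonal_apply_ne _ hkl]
          ring
  have hdiag_rank : (Matrix.diagonal w).rank = M - 1 := by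
    rw [Matrix.rank_diagonal]
    have hiff : ∀ i : Fin M, w i ≠ 0 ↔ ¬ i = 0 := by
      intro i
      by_cases h : (i : ℕ) = 0
      · have hi : i = 0 := Fin.ext (by simpa using h)
        simp [hw, h, hi]
      · have hi : i ≠ 0 := fun hh => h (by simp [hh])
        simp [hw, h, hi]
    rw [Fintype.card_congr (Equiv.subtypeEquivRight hiff)]
    rw [Fintype.card_subtype_compl, Fintype.card_subtype_eq, Fintype.card_fin]
  have hlow : M - 1 ≤ S.rank := by
    calc M - 1 = (Matrix.diagonal w).rank := hdiag_rank.symm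
      _ = (Matrix.diagonal w * S * (Matrix.diagonal w * S)ᵀ).rank := by rw [hmul]
      _ = (Matrix.diagonal w * S).rank := Matrix.rank_self_mul_transpose _
      _ ≤ S.rank := Matrix.rank_mul_le_right _ _
  -- upper bound
  have hupper : S.rank ≤ M - 1 := by
    set v : Fin M → ℝ := fun n => (-1 : ℝ) ^ (n : ℕ) with hv
    have hSv : S.mulVec v = 0 := by
      ext k
      rw [Matrix.mulVec, dotProduct]
      simp only [Pi.zero_apply]
      by_cases hk0 : (k : ℕ) = 0
      · have hentry : ∀ n : Fin M, S k n * v n = Real.sqrt (1 / M) * (-1 : ℝ) ^ (n : ℕ) := by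
          intro n
          rw [hSdef, hv]
          simp only [modDstMat, Matrix.of_apply, if_pos hk0]
        rw [Finset.sum_congr rfl fun n _ => hentry n, ← Finset.mul_sum]
        have : ∑ n : Fin M, (-1 : ℝ) ^ (n : ℕ) = ∑ n ∈ Finset.range M, (-1 : ℝ) ^ n :=
          Fin.sum_univ_eq_sum_range (fun n : ℕ => (-1 : ℝ) ^ n) M
        rw [this, neg_one_geom_sum, if_pos hEven, mul_zero]
      · have hentry : ∀ n : Fin M, S k n * v n = Real.sqrt (2 / M) *
            (Real.sin (Real.pi / M * (k : ℕ) * ((n : ℕ) + 1 / 2)) * (-1 : ℝ) ^ (n : ℕ)) := by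
          intro n
          rw [hSdef, hv]
          simp only [modDstMat, Matrix.of_apply, if_neg hk0]
          ring
        rw [Finset.sum_congr rfl fun n _ => hentry n, ← Finset.mul_sum]
        have hconv : ∑ n : Fin M,
            Real.sin (Real.pi / M * (k : ℕ) * ((n : ℕ) + 1 / 2)) * (-1 : ℝ) ^ (n : ℕ) =
            ∑ n ∈ Finset.range M,
              Real.sin (Real.pi / M * (k : ℕ) * ((n : ℕ) + 1 / 2)) * (-1 : ℝ) ^ n :=
          Fin.sum_univ_eq_sum_range (fun n : ℕ => Real.sin (Real.pi / M * (k : ℕ) * ((n : ℝ) + 1 / 2)) *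
            (-1 : ℝ) ^ n) M
        rw [hconv, dst_alt M (k : ℕ) hM0 (by omega) k.isLt, mul_zero]
    have hv0 : v ≠ 0 := by
      intro h
      have := congrFun h ⟨0, hM0⟩
      simp [hv] at this
    have hkerpos : 0 < Module.finrank ℝ (LinearMap.ker S.mulVecLin) := by
      rw [Module.finrank_pos_iff_exists_ne_zero]
      refine ⟨⟨v, ?_⟩, ?_⟩
      · rw [LinearMap.mem_ker, Matrix.mulVecLin_apply, hSv]
      · intro h
        exact hv0 (congrArg Subtype.val h)
    have hrn := LinearMap.finrank_range_add_finrank_ker S.mulVecLin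
    rw [Module.finrank_pi, Fintype.card_fin] at hrn
    have hrk : S.rank = Module.finrank ℝ (LinearMap.range S.mulVecLin) := rfl
    omega
  omega
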